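/- Let x_1,...,x_N : [0,∞) → ℝ be a solution of the first-order cooperative system with communication failures (fixed scaling) on the real line, and fix T, μ > 0 such that every weight M_ij satisfies the Persistent Excitation condition with parameters μ, T. Let D(t) := max_{i,j} |x_i(t) − x_j(t)|, let φ_min and φ_max be the minimum and maximum of φ on [0, D(0)], and set K_min := φ_min, K_max := φ_max, γ̃ := μ K_min / (N(1 + K_max T) + 2 μ K_min). Then for all n ∈ ℕ, D(nT) ≤ (1 − exp(−K_max T) γ̃)^n · D(0). -/

import Mathlib

open MeasureTheory Set Filter
set_option maxHeartbeats 2000000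

/-- Interval integrability from a.e.-measurability and a bound on `Icc a b`. -/
lemma II_of_bdd {f : ℝ → ℝ} {a b C : ℝ} (hab : a ≤ b)
    (hm : AEMeasurable f (volume.restrict (Icc a b)))
    (hb : ∀ s ∈ Icc a b, |f s| ≤ C) :
    IntervalIntegrable f volume a b := by
  have hInt : IntegrableOn f (Icc a b) volume := by
    constructor
    · exact aestronglyMeasurable_iff_aemeasurable.mpr hm
    · apply HasFiniteIntegral.of_bounded (C := C)
      refine (ae_restrict_iff' measurableSet_Icc).mpr (ae_of_all _ ?_)
      intro s hs
      simpa [Real.norm_eq_abs] using hb s hs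
  have : IntegrableOn f (uIcc a b) volume := by rwa [uIcc_of_le hab]
  exact this.intervalIntegrable

/-- Monotonicity of interval integrals from a pointwise bound on the open interval. -/
lemma integral_mono_Ioo {f g : ℝ → ℝ} {a b : ℝ} (hab : a ≤ b)
    (hf : IntervalIntegrable f volume a b) (hg : IntervalIntegrable g volume a b)
    (h : ∀ r ∈ Ioo a b, f r ≤ g r) :
    ∫ r in a..b, f r ≤ ∫ r in a..b, g r := by
  rw [intervalIntegral.integral_of_le hab, intervalIntegral.integral_of_le hab,
    integral_Ioc_eq_integral_Ioo, integral_Ioc_eq_integral_Ioo]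
  exact setIntegral_mono_on (hf.1.mono_set Ioo_subset_Ioc_self)
    (hg.1.mono_set Ioo_subset_Ioc_self) measurableSet_Ioo h

/-- Integral of `exp (c*s+e)`. -/
lemma integral_exp_lin {c : ℝ} (hc : c ≠ 0) (e a b : ℝ) :
    ∫ s in a..b, Real.exp (c*s + e) = (Real.exp (c*b+e) - Real.exp (c*a+e))/c := by
  have h : ∀ s ∈ uIcc a b, HasDerivAt (fun r => Real.exp (c*r + e)/c) (Real.exp (c*s+e)) s := by
    intro s _
    have h1 : HasDerivAt (fun r : ℝ => c*r + e) c s := by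
      simpa using ((hasDerivAt_id s).const_mul c).add_const e
    have h2 := (h1.exp).div_const c
    rw [mul_div_assoc, div_self hc, mul_one] at h2
    exact h2
  rw [intervalIntegral.integral_eq_sub_of_hasDerivAt h
    ((Real.continuous_exp.comp (by fun_prop)).intervalIntegrable _ _)]
  ring

/-- Backward Grönwall inequality in integral form. -/
lemma gron_back {Q : ℝ → ℝ} {a b K : ℝ} (hab : a ≤ b) (hK : 0 < K)
    (hQc : ContinuousOn Q (Icc a b))
    (hineq : ∀ s ∈ Icc a b, Q s ≤ Q b + K * ∫ r in s..b, Q r) :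
    ∀ s ∈ Icc a b, Q s ≤ Q b * Real.exp (K * (b - s)) := by
  intro s hs
  have hexp : (0:ℝ) < Real.exp (K * (b - s)) := Real.exp_pos _
  by_contra hcon
  push_neg at hcon
  set ε : ℝ := (Q s - Q b * Real.exp (K * (b - s))) / (2 * Real.exp (K * (b - s))) with hε
  have hεpos : 0 < ε := by
    apply div_pos (by linarith) (by positivity)
  have hkey : Q s ≤ (Q b + ε) * Real.exp (K * (b - s)) := by
    -- the crossing argument
    by_contra hcon2
    push_neg at hcon2
    set S : Set ℝ := {t | t ∈ Icc a b ∧ (Q b + ε) * Real.exp (K * (b - t)) ≤ Q t} with hS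
    have hSne : S.Nonempty := ⟨s, hs, hcon2.le⟩
    have hSclosed : IsClosed S := by
      have hrw : S = Icc a b ∩ (fun t => (Q b + ε) * Real.exp (K * (b - t)) - Q t) ⁻¹' Iic 0 := by
        ext t
        simp only [hS, mem_setOf_eq, mem_inter_iff, mem_preimage, mem_Iic, sub_nonpos]
      rw [hrw]
      refine ContinuousOn.preimage_isClosed_of_isClosed ?_ isClosed_Icc isClosed_Iic
      exact (continuousOn_const.mul ((Real.continuous_exp.comp (by fun_prop)).continuousOn)).sub hQc
    have hSbdd : BddAbove S := BddAbove.mono (fun t ht => ht.1) bddAbove_Icc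
    set τ := sSup S with hτ
    have hτS : τ ∈ S := hSclosed.csSup_mem hSne hSbdd
    obtain ⟨hτIcc, hτge⟩ := hτS
    have hτb : τ < b := by
      rcases lt_or_eq_of_le hτIcc.2 with h | h
      · exact h
      · exfalso
        rw [h] at hτge
        simp only [sub_self, mul_zero, Real.exp_zero, mul_one] at hτge
        linarith
    have hpt : ∀ r ∈ Ioo τ b, Q r ≤ (Q b + ε) * Real.exp (K * (b - r)) := by
      intro r hr
      have hrIcc : r ∈ Icc a b := ⟨le_trans hτIcc.1 hr.1.le, hr.2.le⟩
      by_contra hc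
      push_neg at hc
      have hrS : r ∈ S := ⟨hrIcc, hc.le⟩
      exact absurd (le_csSup hSbdd hrS) (not_le.mpr hr.1)
    -- integrate
    have hQint : IntervalIntegrable Q volume τ b :=
      (hQc.mono (Icc_subset_Icc hτIcc.1 le_rfl)).intervalIntegrable_of_Icc hτb.le
    have hcomp : IntervalIntegrable (fun r => (Q b + ε) * Real.exp (K * (b - r))) volume τ b :=
      (Continuous.intervalIntegrable (by fun_prop) _ _)
    have hI1 : ∫ r in τ..b, Q r ≤ ∫ r in τ..b, (Q b + ε) * Real.exp (K * (b - r)) :=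
      integral_mono_Ioo hτb.le hQint hcomp hpt
    have hI2 : ∫ r in τ..b, (Q b + ε) * Real.exp (K * (b - r))
        = (Q b + ε) * ((Real.exp (K*(b-τ)) - 1)/K) := by
      rw [intervalIntegral.integral_const_mul]
      congr 1
      have hfun : (fun r => Real.exp (K * (b - r))) = fun r => Real.exp ((-K)*r + K*b) := by
        funext r; congr 1; ring
      rw [hfun, integral_exp_lin (by linarith) (K*b) τ b]
      rw [show (-K)*b + K*b = 0 by ring, show (-K)*τ + K*b = K*(b-τ) by ring, Real.exp_zero]
      have hK0 : K ≠ 0 := ne_of_gt hK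
      rw [div_neg]
      ring
    have hineqτ := hineq τ hτIcc
    have hβ : (1:ℝ) ≤ Real.exp (K*(b-τ)) := by
      rw [show (1:ℝ) = Real.exp 0 by simp]
      exact Real.exp_le_exp.mpr (by nlinarith [hτb.le])
    have hKI : K * ∫ r in τ..b, Q r ≤ (Q b + ε) * (Real.exp (K*(b-τ)) - 1) := by
      calc K * ∫ r in τ..b, Q r ≤ K * ((Q b + ε) * ((Real.exp (K*(b-τ)) - 1)/K)) := by
            apply mul_le_mul_of_nonneg_left (hI1.trans hI2.le) hK.le
        _ = (Q b + ε) * (Real.exp (K*(b-τ)) - 1) := by field_simp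
    nlinarith [hτge, hineqτ, hKI]
  have hεe : ε * Real.exp (K * (b - s)) = (Q s - Q b * Real.exp (K * (b - s)))/2 := by
    rw [hε]; field_simp
  have hexpand : (Q b + ε) * Real.exp (K * (b - s))
      = Q b * Real.exp (K * (b - s)) + ε * Real.exp (K * (b - s)) := by ring
  rw [hexpand, hεe] at hkey
  linarith

noncomputable def gf (N : ℕ) (φ : ℝ → ℝ) (M : Fin N → Fin N → ℝ → ℝ) (x : Fin N → ℝ → ℝ)
    (i : Fin N) (s : ℝ) : ℝ :=
  (N : ℝ)⁻¹ * ∑ j, M i j s * φ |x i s - x j s| * (x j s - x i s)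

lemma gf_II {N : ℕ} {φ : ℝ → ℝ} {M : Fin N → Fin N → ℝ → ℝ} {x : Fin N → ℝ → ℝ}
    (hφ_lip : ∃ K : NNReal, LipschitzOnWith K φ (Ici 0))
    (hM_meas : ∀ i j, Measurable (M i j))
    (hM_range : ∀ i j, ∀ t : ℝ, 0 ≤ t → M i j t ∈ Icc (0:ℝ) 1)
    (hx_cont : ∀ i, ContinuousOn (x i) (Ici 0))
    (i : Fin N) {a b : ℝ} (ha : 0 ≤ a) (hab : a ≤ b) :
    IntervalIntegrable (gf N φ M x i) volume a b := by
  obtain ⟨Kφ, hlip⟩ := hφ_lip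
  have hsub : Icc a b ⊆ Ici (0:ℝ) := fun s hs => le_trans ha hs.1
  have hInt : IntervalIntegrable
      (fun s => ∑ j, M i j s * φ |x i s - x j s| * (x j s - x i s)) volume a b := by
    have hfn : (∑ j : Fin N, fun s => M i j s * φ |x i s - x j s| * (x j s - x i s))
        = fun s => ∑ j, M i j s * φ |x i s - x j s| * (x j s - x i s) := by
      funext s
      simp [Finset.sum_apply]
    rw [← hfn]
    apply IntervalIntegrable.sum
    intro j _
    have hxi := (hx_cont i).mono hsub
    have hxj := (hx_cont j).mono hsub
    have hu : ContinuousOn (fun s => φ |x i s - x j s| * (x j s - x i s)) (Icc a b) :=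
      (hlip.continuousOn.comp (hxi.sub hxj).abs (fun s _ => mem_Ici.mpr (abs_nonneg _))).mul (hxj.sub hxi)
    obtain ⟨C, hC⟩ := isCompact_Icc.exists_bound_of_continuousOn hu
    refine II_of_bdd hab (C := C) ?_ ?_
    · have hmm : AEMeasurable (fun s => M i j s * (φ |x i s - x j s| * (x j s - x i s)))
          (volume.restrict (Icc a b)) :=
        ((hM_meas i j).aemeasurable.restrict).mul (hu.aemeasurable measurableSet_Icc)
      simpa only [← mul_assoc] using hmm
    · intro s hs
      have h01 := hM_range i j s (hsub hs)
      have hCs := hC s hs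
      rw [Real.norm_eq_abs] at hCs
      have hC0 : (0:ℝ) ≤ C := le_trans (abs_nonneg _) hCs
      calc |M i j s * φ |x i s - x j s| * (x j s - x i s)|
          = |M i j s| * |φ |x i s - x j s| * (x j s - x i s)| := by rw [mul_assoc, abs_mul]
        _ ≤ 1 * C := by
            apply mul_le_mul _ hCs (abs_nonneg _) zero_le_one
            exact abs_le.mpr ⟨by linarith [h01.1], h01.2⟩
        _ = C := one_mul C
  exact hInt.const_mul ((N:ℝ)⁻¹)

lemma xinc {N : ℕ} {φ : ℝ → ℝ} {M : Fin N → Fin N → ℝ → ℝ} {x : Fin N → ℝ → ℝ}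
    (hφ_lip : ∃ K : NNReal, LipschitzOnWith K φ (Ici 0))
    (hM_meas : ∀ i j, Measurable (M i j))
    (hM_range : ∀ i j, ∀ t : ℝ, 0 ≤ t → M i j t ∈ Icc (0:ℝ) 1)
    (hx_cont : ∀ i, ContinuousOn (x i) (Ici 0))
    (hx_sol : ∀ i, ∀ t : ℝ, 0 ≤ t → x i t = x i 0 + ∫ s in (0:ℝ)..t, gf N φ M x i s)
    (i : Fin N) {a b : ℝ} (ha : 0 ≤ a) (hab : a ≤ b) :
    x i b - x i a = ∫ s in a..b, gf N φ M x i s := by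
  have hb0 : 0 ≤ b := le_trans ha hab
  have hIa : IntervalIntegrable (gf N φ M x i) volume 0 a :=
    gf_II hφ_lip hM_meas hM_range hx_cont i le_rfl ha
  have hIb : IntervalIntegrable (gf N φ M x i) volume 0 b :=
    gf_II hφ_lip hM_meas hM_range hx_cont i le_rfl hb0
  have hkey := intervalIntegral.integral_interval_sub_left hIb hIa
  rw [hx_sol i a ha, hx_sol i b hb0]
  linarith [hkey]

lemma max_inv {N : ℕ} (hN : 0 < N) {φ : ℝ → ℝ} {M : Fin N → Fin N → ℝ → ℝ}
    {x : Fin N → ℝ → ℝ}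
    (hφ_lip : ∃ K : NNReal, LipschitzOnWith K φ (Ici 0))
    (hφ_pos : ∀ r : ℝ, 0 ≤ r → 0 < φ r)
    (hM_meas : ∀ i j, Measurable (M i j))
    (hM_range : ∀ i j, ∀ t : ℝ, 0 ≤ t → M i j t ∈ Icc (0:ℝ) 1)
    (hx_cont : ∀ i, ContinuousOn (x i) (Ici 0))
    (hx_sol : ∀ i, ∀ t : ℝ, 0 ≤ t → x i t = x i 0 + ∫ s in (0:ℝ)..t, gf N φ M x i s)
    {t0 t1 : ℝ} (ht0 : 0 ≤ t0) (ht01 : t0 ≤ t1) {A : ℝ} (hA : ∀ i, x i t0 ≤ A) :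
    ∀ i, x i t1 ≤ A := by
  obtain ⟨Kφ, hlip⟩ := hφ_lip
  have hNne : (N:ℝ) ≠ 0 := Nat.cast_ne_zero.mpr hN.ne'
  have hNpos : (0:ℝ) < N := Nat.cast_pos.mpr hN
  haveI : Nonempty (Fin N) := ⟨⟨0, hN⟩⟩
  have hsub : Icc t0 t1 ⊆ Ici (0:ℝ) := fun s hs => le_trans ht0 hs.1
  -- a uniform bound C on all interaction strengths
  set F : ℝ → ℝ := fun s => ∑ k : Fin N, ∑ l : Fin N, (φ 0 + (Kφ:ℝ) * |x k s - x l s|) with hF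
  have hFc : ContinuousOn F (Icc t0 t1) := by
    apply continuousOn_finset_sum
    intro k _
    apply continuousOn_finset_sum
    intro l _
    exact continuousOn_const.add (continuousOn_const.mul
      (((hx_cont k).mono hsub).sub ((hx_cont l).mono hsub)).abs)
  obtain ⟨C, hC⟩ := isCompact_Icc.exists_bound_of_continuousOn hFc
  have hφle : ∀ s ∈ Icc t0 t1, ∀ k l : Fin N, φ |x k s - x l s| ≤ C := by
    intro s hs k l
    have h1 : φ |x k s - x l s| ≤ φ 0 + (Kφ:ℝ) * |x k s - x l s| := by
      have hd := hlip.dist_le_mul |x k s - x l s| (mem_Ici.mpr (abs_nonneg _)) 0 (mem_Ici.mpr le_rfl)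
      rw [Real.dist_eq, Real.dist_eq, sub_zero] at hd
      have := le_abs_self (φ |x k s - x l s| - φ 0)
      have habs : |(|x k s - x l s|)| = |x k s - x l s| := abs_abs _
      rw [habs] at hd
      linarith
    have h2 : φ 0 + (Kφ:ℝ) * |x k s - x l s| ≤ F s := by
      rw [hF]
      have hterm : ∀ k' l' : Fin N, 0 ≤ φ 0 + (Kφ:ℝ) * |x k' s - x l' s| := by
        intro k' l'
        have := hφ_pos 0 le_rfl
        positivity
      calc φ 0 + (Kφ:ℝ) * |x k s - x l s|
          ≤ ∑ l' : Fin N, (φ 0 + (Kφ:ℝ) * |x k s - x l' s|) :=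
            Finset.single_le_sum (fun l' _ => hterm k l') (Finset.mem_univ l)
        _ ≤ ∑ k' : Fin N, ∑ l' : Fin N, (φ 0 + (Kφ:ℝ) * |x k' s - x l' s|) :=
            Finset.single_le_sum (fun k' _ => Finset.sum_nonneg fun l' _ => hterm k' l')
              (Finset.mem_univ k)
    have h3 := hC s hs
    rw [Real.norm_eq_abs] at h3
    linarith [le_abs_self (F s), h1, h2, h3]
  have hCpos : 0 < C := by
    have h1 := hφle t0 ⟨le_rfl, ht01⟩ ⟨0, hN⟩ ⟨0, hN⟩
    simp only [sub_self, abs_zero] at h1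
    linarith [hφ_pos 0 le_rfl]
  -- main ε-claim
  have main : ∀ ε > (0:ℝ), ∀ t ∈ Icc t0 t1, ∀ i, x i t ≤ A + ε * Real.exp (2*C*(t - t0)) := by
    intro ε hε
    by_contra hcon
    push_neg at hcon
    obtain ⟨t', ht', i', hi'⟩ := hcon
    set S : Set ℝ := {t | t ∈ Icc t0 t1 ∧ ∃ i, A + ε * Real.exp (2*C*(t - t0)) ≤ x i t} with hS
    have hSne : S.Nonempty := ⟨t', ht', i', hi'.le⟩
    have hSclosed : IsClosed S := by
      have hrw : S = ⋃ i : Fin N,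
          (Icc t0 t1 ∩ (fun t => A + ε * Real.exp (2*C*(t - t0)) - x i t) ⁻¹' Iic 0) := by
        ext t
        simp only [hS, mem_setOf_eq, mem_iUnion, mem_inter_iff, mem_preimage, mem_Iic, sub_nonpos]
        tauto
      rw [hrw]
      apply isClosed_iUnion_of_finite
      intro i
      refine ContinuousOn.preimage_isClosed_of_isClosed ?_ isClosed_Icc isClosed_Iic
      exact (continuousOn_const.add (continuousOn_const.mul
        ((Real.continuous_exp.comp (by fun_prop)).continuousOn))).sub ((hx_cont i).mono hsub)
    have hSbddb : BddBelow S := ⟨t0, fun y hy => hy.1.1⟩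
    set τ := sInf S with hτdef
    have hτS : τ ∈ S := hSclosed.csInf_mem hSne hSbddb
    obtain ⟨hτIcc, i, hiτ⟩ := hτS
    have hτne : t0 < τ := by
      rcases lt_or_eq_of_le hτIcc.1 with h | h
      · exact h
      · exfalso
        rw [← h] at hiτ
        simp only [sub_self, mul_zero, Real.exp_zero, mul_one] at hiτ
        linarith [hA i]
    -- the last time x i was below the half-level
    set P : Set ℝ := {s | s ∈ Icc t0 τ ∧ x i s ≤ A + ε * Real.exp (2*C*(s - t0)) / 2} with hP
    have hPne : P.Nonempty := by
      refine ⟨t0, ⟨le_rfl, hτIcc.1⟩, ?_⟩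
      simp only [sub_self, mul_zero, Real.exp_zero]
      linarith [hA i]
    have hPclosed : IsClosed P := by
      have hrw : P = Icc t0 τ ∩
          (fun s => x i s - (A + ε * Real.exp (2*C*(s - t0)) / 2)) ⁻¹' Iic 0 := by
        ext s
        simp only [hP, mem_setOf_eq, mem_inter_iff, mem_preimage, mem_Iic, sub_nonpos]
      rw [hrw]
      refine ContinuousOn.preimage_isClosed_of_isClosed ?_ isClosed_Icc isClosed_Iic
      have hsub2 : Icc t0 τ ⊆ Ici (0:ℝ) := fun s hs => le_trans ht0 hs.1
      exact ((hx_cont i).mono hsub2).sub (continuousOn_const.add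
        ((continuousOn_const.mul ((Real.continuous_exp.comp (by fun_prop)).continuousOn)).div_const 2))
    have hPbdd : BddAbove P := ⟨τ, fun y hy => hy.1.2⟩
    set σ := sSup P with hσdef
    have hσP : σ ∈ P := hPclosed.csSup_mem hPne hPbdd
    obtain ⟨hσIcc, hσhalf⟩ := hσP
    -- pointwise information on (σ, τ)
    have hmid : ∀ s ∈ Ioo σ τ,
        (∀ k, x k s < A + ε * Real.exp (2*C*(s - t0))) ∧
        A + ε * Real.exp (2*C*(s - t0)) / 2 < x i s := by
      intro s hsm
      have hsIcc : s ∈ Icc t0 t1 := ⟨le_trans hσIcc.1 hsm.1.le, le_trans hsm.2.le hτIcc.2⟩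
      constructor
      · intro k
        by_contra hc
        push_neg at hc
        have : s ∈ S := ⟨hsIcc, k, hc⟩
        have := csInf_le hSbddb this
        rw [← hτdef] at this
        exact absurd this (not_le.mpr hsm.2)
      · by_contra hc
        push_neg at hc
        have : s ∈ P := ⟨⟨le_trans hσIcc.1 hsm.1.le, hsm.2.le⟩, hc⟩
        have := le_csSup hPbdd this
        rw [← hσdef] at this
        exact absurd this (not_le.mpr hsm.1)
    -- bound the velocity on (σ, τ)
    have hgb : ∀ s ∈ Ioo σ τ,
        gf N φ M x i s ≤ C * ε * Real.exp (2*C*(s - t0)) / 2 := by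
      intro s hsm
      obtain ⟨hup, hlow⟩ := hmid s hsm
      have hs0 : (0:ℝ) ≤ s := le_trans ht0 (le_trans hσIcc.1 hsm.1.le)
      have hsIcc : s ∈ Icc t0 t1 := ⟨le_trans hσIcc.1 hsm.1.le, le_trans hsm.2.le hτIcc.2⟩
      have hterm : ∀ k : Fin N, M i k s * φ |x i s - x k s| * (x k s - x i s)
          ≤ C * (ε * Real.exp (2*C*(s - t0)) / 2) := by
        intro k
        have hM01 := hM_range i k s hs0
        have hφpos' := hφ_pos |x i s - x k s| (abs_nonneg _)
        have hMφ : 0 ≤ M i k s * φ |x i s - x k s| := mul_nonneg hM01.1 hφpos'.le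
        have hMφC : M i k s * φ |x i s - x k s| ≤ C := by
          calc M i k s * φ |x i s - x k s| ≤ 1 * φ |x i s - x k s| :=
                mul_le_mul_of_nonneg_right hM01.2 hφpos'.le
            _ = φ |x i s - x k s| := one_mul _
            _ ≤ C := hφle s hsIcc i k
        have hgap : x k s - x i s ≤ ε * Real.exp (2*C*(s - t0)) / 2 := by
          have := hup k
          linarith [hlow]
        have hgappos : 0 ≤ A + ε * Real.exp (2*C*(s - t0)) - x i s := by
          linarith [hup i]
        calc M i k s * φ |x i s - x k s| * (x k s - x i s)
            ≤ M i k s * φ |x i s - x k s| * (ε * Real.exp (2*C*(s - t0)) / 2) :=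
              mul_le_mul_of_nonneg_left hgap hMφ
          _ ≤ C * (ε * Real.exp (2*C*(s - t0)) / 2) := by
              apply mul_le_mul_of_nonneg_right hMφC
              positivity
      simp only [gf]
      calc (N:ℝ)⁻¹ * ∑ k, M i k s * φ |x i s - x k s| * (x k s - x i s)
          ≤ (N:ℝ)⁻¹ * ∑ _k : Fin N, C * (ε * Real.exp (2*C*(s - t0)) / 2) := by
            apply mul_le_mul_of_nonneg_left (Finset.sum_le_sum fun k _ => hterm k)
            positivity
        _ = C * ε * Real.exp (2*C*(s - t0)) / 2 := by
            rw [Finset.sum_const, Finset.card_univ, Fintype.card_fin, nsmul_eq_mul]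
            field_simp
    -- integrate the bound
    have hστ : σ ≤ τ := hσIcc.2
    have hxinc := xinc ⟨Kφ, hlip⟩ hM_meas hM_range hx_cont hx_sol i
      (le_trans ht0 hσIcc.1) hστ
    have hgII : IntervalIntegrable (gf N φ M x i) volume σ τ :=
      gf_II ⟨Kφ, hlip⟩ hM_meas hM_range hx_cont i (le_trans ht0 hσIcc.1) hστ
    have hcompII : IntervalIntegrable (fun s => C * ε * Real.exp (2*C*(s - t0)) / 2) volume σ τ :=
      Continuous.intervalIntegrable (by fun_prop) _ _
    have hIle : ∫ s in σ..τ, gf N φ M x i s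
        ≤ ∫ s in σ..τ, C * ε * Real.exp (2*C*(s - t0)) / 2 :=
      integral_mono_Ioo hστ hgII hcompII hgb
    have hIval : ∫ s in σ..τ, C * ε * Real.exp (2*C*(s - t0)) / 2
        = ε * (Real.exp (2*C*(τ - t0)) - Real.exp (2*C*(σ - t0))) / 4 := by
      have hfun : (fun s => C * ε * Real.exp (2*C*(s - t0)) / 2)
          = fun s => (C * ε / 2) * Real.exp ((2*C)*s + (-(2*C*t0))) := by
        funext s
        rw [show (2*C)*s + (-(2*C*t0)) = 2*C*(s - t0) by ring]
        ring
      rw [hfun, intervalIntegral.integral_const_mul,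
        integral_exp_lin (ne_of_gt (by linarith : (0:ℝ) < 2*C)) (-(2*C*t0)) σ τ,
        show (2*C)*τ + (-(2*C*t0)) = 2*C*(τ - t0) by ring,
        show (2*C)*σ + (-(2*C*t0)) = 2*C*(σ - t0) by ring]
      field_simp
      ring
    have hexpmono : Real.exp (2*C*(σ - t0)) ≤ Real.exp (2*C*(τ - t0)) :=
      Real.exp_le_exp.mpr (by nlinarith [hστ])
    have hexpσpos : (0:ℝ) < Real.exp (2*C*(σ - t0)) := Real.exp_pos _
    have hexpτpos : (0:ℝ) < Real.exp (2*C*(τ - t0)) := Real.exp_pos _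
    -- final contradiction
    rw [hIval] at hIle
    nlinarith [hiτ, hσhalf, hxinc, hIle, mul_pos hε hexpτpos,
      mul_le_mul_of_nonneg_left hexpmono hε.le]
  -- let ε → 0
  intro i
  by_contra hc
  push_neg at hc
  set E := Real.exp (2*C*(t1 - t0)) with hE
  have hEpos : 0 < E := Real.exp_pos _
  have := main ((x i t1 - A) / (2*E)) (div_pos (by linarith) (by positivity)) t1 ⟨ht01, le_rfl⟩ i
  rw [← hE] at this
  have : x i t1 ≤ A + (x i t1 - A)/2 := by
    calc x i t1 ≤ A + (x i t1 - A) / (2*E) * E := this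
      _ = A + (x i t1 - A)/2 := by field_simp
  linarith

/-- Explicit exponential decay of the diameter for a
solution of the first-order cooperative system with communication failures
(fixed scaling) on the real line, under the Persistent Excitation condition
on every weight. -/
theorem diameter_decay_PE
    (N : ℕ) (hN : 2 ≤ N)
    (φ : ℝ → ℝ)
    (hφ_lip : ∃ K : NNReal, LipschitzOnWith K φ (Ici 0))
    (hφ_pos : ∀ r : ℝ, 0 ≤ r → 0 < φ r)
    (M : Fin N → Fin N → ℝ → ℝ)
    (hM_meas : ∀ i j, Measurable (M i j))
    (hM_range : ∀ i j, ∀ t : ℝ, 0 ≤ t → M i j t ∈ Icc (0:ℝ) 1)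
    (x : Fin N → ℝ → ℝ)
    (hx_cont : ∀ i, ContinuousOn (x i) (Ici 0))
    (hx_sol : ∀ i, ∀ t : ℝ, 0 ≤ t → x i t = x i 0 +
      ∫ s in (0:ℝ)..t,
        (N : ℝ)⁻¹ * ∑ j, M i j s * φ |x i s - x j s| * (x j s - x i s))
    (T μ : ℝ) (hT : 0 < T) (hμ : 0 < μ)
    (hPE : ∀ i j, ∀ t : ℝ, 0 ≤ t → μ ≤ ∫ s in t..(t + T), M i j s)
    (D : ℝ → ℝ) (hD : ∀ t, D t = ⨆ i, ⨆ j, |x i t - x j t|)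
    (φmin φmax : ℝ)
    (hφmin : φmin = sInf (φ '' Icc 0 (D 0)))
    (hφmax : φmax = sSup (φ '' Icc 0 (D 0)))
    (Kmin Kmax : ℝ) (hKmin : Kmin = φmin) (hKmax : Kmax = φmax)
    (γtilde : ℝ)
    (hγtilde : γtilde = μ * Kmin / ((N : ℝ) * (1 + Kmax * T) + 2 * μ * Kmin)) :
    ∀ n : ℕ, D ((n : ℝ) * T) ≤ (1 - Real.exp (-(Kmax * T)) * γtilde) ^ n * D 0 := by
  obtain ⟨Kφ, hlip⟩ := hφ_lip
  have hφ_lip' : ∃ K : NNReal, LipschitzOnWith K φ (Ici 0) := ⟨Kφ, hlip⟩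
  have hNpos : 0 < N := by omega
  haveI : Nonempty (Fin N) := ⟨⟨0, hNpos⟩⟩
  have hNR : (0:ℝ) < (N:ℝ) := by exact_mod_cast hNpos
  have hN0 : (N:ℝ) ≠ 0 := ne_of_gt hNR
  have hx_sol' : ∀ i, ∀ t : ℝ, 0 ≤ t → x i t = x i 0 + ∫ s in (0:ℝ)..t, gf N φ M x i s := by
    intro i t ht
    simpa only [gf] using hx_sol i t ht
  -- the reflected system
  set y : Fin N → ℝ → ℝ := fun i t => -(x i t) with hy
  have hy_cont : ∀ i, ContinuousOn (y i) (Ici 0) := fun i => (hx_cont i).neg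
  have hgfneg : ∀ i s, gf N φ M y i s = -(gf N φ M x i s) := by
    intro i s
    simp only [gf]
    have hterm : ∀ j : Fin N, M i j s * φ |y i s - y j s| * (y j s - y i s)
        = -(M i j s * φ |x i s - x j s| * (x j s - x i s)) := by
      intro j
      have h1 : |y i s - y j s| = |x i s - x j s| := by
        simp only [hy]
        rw [show -x i s - -x j s = -(x i s - x j s) by ring, abs_neg]
      rw [h1]
      simp only [hy]
      ring
    rw [Finset.sum_congr rfl (fun j _ => hterm j)]
    rw [Finset.sum_neg_distrib]
    ring
  have hy_sol : ∀ i, ∀ t : ℝ, 0 ≤ t → y i t = y i 0 + ∫ s in (0:ℝ)..t, gf N φ M y i s := by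
    intro i t ht
    have hneg : ∫ s in (0:ℝ)..t, gf N φ M y i s = -∫ s in (0:ℝ)..t, gf N φ M x i s := by
      simp only [hgfneg]
      exact intervalIntegral.integral_neg
    simp only [hy]
    rw [hneg, hx_sol' i t ht]
    ring
  -- invariance of the initial interval
  have inv_up : ∀ {t0 t1 : ℝ}, 0 ≤ t0 → t0 ≤ t1 → ∀ {A : ℝ}, (∀ i, x i t0 ≤ A) → ∀ i, x i t1 ≤ A := by
    intro t0 t1 ht0 ht01 A hA
    exact max_inv hNpos hφ_lip' hφ_pos hM_meas hM_range hx_cont hx_sol' ht0 ht01 hA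
  have inv_lo : ∀ {t0 t1 : ℝ}, 0 ≤ t0 → t0 ≤ t1 → ∀ {B : ℝ}, (∀ i, B ≤ x i t0) → ∀ i, B ≤ x i t1 := by
    intro t0 t1 ht0 ht01 B hB i
    have h := max_inv hNpos hφ_lip' hφ_pos hM_meas hM_range hy_cont hy_sol ht0 ht01 (A := -B)
      (fun k => by simp only [hy]; linarith [hB k]) i
    simp only [hy] at h
    linarith
  -- basic facts about the diameter
  have hbdd : ∀ (f : Fin N → ℝ), BddAbove (range f) := fun f => (finite_range f).bddAbove
  have hpair : ∀ (t : ℝ) (i j : Fin N), |x i t - x j t| ≤ D t := by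
    intro t i j
    rw [hD t]
    calc |x i t - x j t| ≤ ⨆ j', |x i t - x j' t| :=
          le_ciSup (f := fun j' => |x i t - x j' t|) (hbdd _) j
      _ ≤ ⨆ i', ⨆ j', |x i' t - x j' t| :=
          le_ciSup (f := fun i' => ⨆ j', |x i' t - x j' t|) (hbdd _) i
  have hDnn : ∀ t, 0 ≤ D t := by
    intro t
    have := hpair t ⟨0, hNpos⟩ ⟨0, hNpos⟩
    simpa using this
  have hDle : ∀ (t : ℝ) (c : ℝ), (∀ i j, |x i t - x j t| ≤ c) → D t ≤ c := by
    intro t c hc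
    rw [hD t]
    exact ciSup_le fun i => ciSup_le fun j => hc i j
  have hDatt : ∀ t : ℝ, ∃ i j, D t = x i t - x j t := by
    intro t
    obtain ⟨i, hi⟩ := Finite.exists_max (fun i => ⨆ j, |x i t - x j t|)
    obtain ⟨j, hj⟩ := Finite.exists_max (fun j => |x i t - x j t|)
    have h1 : (⨆ j', |x i t - x j' t|) = |x i t - x j t| :=
      le_antisymm (ciSup_le hj) (le_ciSup (f := fun j' => |x i t - x j' t|) (hbdd _) j)
    have h2 : D t = |x i t - x j t| := by
      refine le_antisymm ?_ (hpair t i j)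
      rw [hD t]
      exact ciSup_le fun i' => le_trans (hi i') h1.le
    rcases le_or_gt (x j t) (x i t) with h | h
    · exact ⟨i, j, by rw [h2, abs_of_nonneg (by linarith)]⟩
    · exact ⟨j, i, by rw [h2, abs_of_neg (by linarith)]; ring⟩
  have hDmono : ∀ {s t : ℝ}, 0 ≤ s → s ≤ t → D t ≤ D s := by
    intro s t hs hst
    obtain ⟨ia, hia⟩ := Finite.exists_max (fun k => x k s)
    obtain ⟨ib, hib⟩ := Finite.exists_min (fun k => x k s)
    have hup := inv_up hs hst hia
    have hlo := inv_lo hs hst hib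
    have h1 : D t ≤ x ia s - x ib s := by
      apply hDle
      intro i j
      rw [abs_sub_le_iff]
      exact ⟨by linarith [hup i, hlo j], by linarith [hup j, hlo i]⟩
    exact h1.trans ((le_abs_self _).trans (hpair s ia ib))
  -- facts about φ on [0, D 0]
  have hφc : ContinuousOn φ (Ici (0:ℝ)) := hlip.continuousOn
  have hD00 : (0:ℝ) ≤ D 0 := hDnn 0
  have hcomp : IsCompact (φ '' Icc 0 (D 0)) :=
    isCompact_Icc.image_of_continuousOn (hφc.mono (fun r hr => hr.1))
  have hne : (φ '' Icc 0 (D 0)).Nonempty := ⟨φ 0, 0, ⟨le_rfl, hD00⟩, rfl⟩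
  have hKminpos : 0 < Kmin := by
    have hKmem : Kmin ∈ φ '' Icc 0 (D 0) := by
      rw [hKmin, hφmin]
      exact hcomp.sInf_mem hne
    obtain ⟨r, hr, hrphi⟩ := hKmem
    rw [← hrphi]
    exact hφ_pos r hr.1
  have hKminle : ∀ r ∈ Icc 0 (D 0), Kmin ≤ φ r := by
    intro r hr
    rw [hKmin, hφmin]
    exact csInf_le hcomp.bddBelow ⟨r, hr, rfl⟩
  have hKmaxge : ∀ r ∈ Icc 0 (D 0), φ r ≤ Kmax := by
    intro r hr
    rw [hKmax, hφmax]
    exact le_csSup hcomp.bddAbove ⟨r, hr, rfl⟩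
  have hKmaxpos : 0 < Kmax :=
    lt_of_lt_of_le hKminpos ((hKminle 0 ⟨le_rfl, hD00⟩).trans (hKmaxge 0 ⟨le_rfl, hD00⟩))
  -- facts about γtilde and the exponential factor
  have hdenpos : 0 < (N:ℝ)*(1+Kmax*T) + 2*μ*Kmin := by
    have h1 : 0 < Kmax*T := mul_pos hKmaxpos hT
    have h2 : 0 < μ*Kmin := mul_pos hμ hKminpos
    nlinarith [mul_pos hNR (show (0:ℝ) < 1 + Kmax*T by linarith)]
  have hγpos : 0 < γtilde := by
    rw [hγtilde]
    exact div_pos (mul_pos hμ hKminpos) hdenpos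
  have hγhalf : γtilde ≤ 1/2 := by
    rw [hγtilde, div_le_iff₀ hdenpos]
    have h1 : 0 < Kmax*T := mul_pos hKmaxpos hT
    nlinarith [mul_pos hNR (show (0:ℝ) < 1 + Kmax*T by linarith), mul_pos hμ hKminpos]
  set ee := Real.exp (-(Kmax*T)) with hee
  have heepos : 0 < ee := Real.exp_pos _
  have heele : ee ≤ 1 := by
    rw [hee, show (1:ℝ) = Real.exp 0 by simp]
    exact Real.exp_le_exp.mpr (by nlinarith [mul_pos hKmaxpos hT])
  have hee1 : ee * Real.exp (Kmax*T) = 1 := by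
    rw [hee, ← Real.exp_add]
    simp
  have hc0 : 0 ≤ 1 - ee * γtilde := by nlinarith [mul_nonneg (show (0:ℝ) ≤ 1 - ee by linarith) hγpos.le, hγhalf]
  -- THE ONE-STEP CONTRACTION
  have one_step : ∀ t0 : ℝ, 0 ≤ t0 → D (t0 + T) ≤ (1 - ee * γtilde) * D t0 := by
    intro t0 ht0
    have htT : t0 ≤ t0 + T := by linarith
    have hsubT : Icc t0 (t0+T) ⊆ Ici (0:ℝ) := fun s hs => le_trans ht0 hs.1
    have hDm1 : D (t0 + T) ≤ D t0 := hDmono ht0 htT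
    have hDt0nn := hDnn t0
    rcases eq_or_lt_of_le hDt0nn with hzero | hpos
    · rw [← hzero, mul_zero]
      linarith
    by_contra hcon
    push_neg at hcon
    obtain ⟨ia, hia⟩ := Finite.exists_max (fun k => x k t0)
    obtain ⟨ib, hib⟩ := Finite.exists_min (fun k => x k t0)
    have hDt0 : D t0 = x ia t0 - x ib t0 := by
      refine le_antisymm (hDle t0 _ ?_) ((le_abs_self _).trans (hpair t0 ia ib))
      intro i j
      rw [abs_sub_le_iff]
      exact ⟨by linarith [hia i, hib j], by linarith [hia j, hib i]⟩
    have hup : ∀ t ∈ Icc t0 (t0+T), ∀ k, x k t ≤ x ia t0 := fun t ht k => inv_up ht0 ht.1 hia k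
    have hlo : ∀ t ∈ Icc t0 (t0+T), ∀ k, x ib t0 ≤ x k t := fun t ht k => inv_lo ht0 ht.1 hib k
    have hDTpos : 0 < D (t0+T) := lt_of_le_of_lt (mul_nonneg hc0 hDt0nn) hcon
    obtain ⟨i, j, hij⟩ := hDatt (t0 + T)
    have hij_ne : i ≠ j := by
      intro h
      rw [h] at hij
      simp only [sub_self] at hij
      linarith
    set z : ℝ → ℝ := fun s => x i s - x j s with hz
    set Q : ℝ → ℝ := fun s => D t0 - z s with hQdef
    have hQnn : ∀ s ∈ Icc t0 (t0+T), 0 ≤ Q s := by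
      intro s hs
      have h1 := hup s hs i
      have h2 := hlo s hs j
      simp only [hQdef, hz]
      rw [hDt0]
      linarith
    have hQcont : ContinuousOn Q (Icc t0 (t0+T)) :=
      continuousOn_const.sub (((hx_cont i).mono hsubT).sub ((hx_cont j).mono hsubT))
    have hdistD : ∀ s ∈ Icc t0 (t0+T), ∀ k l : Fin N, |x k s - x l s| ∈ Icc 0 (D 0) := by
      intro s hs k l
      refine ⟨abs_nonneg _, ?_⟩
      have h1 := hup s hs k
      have h2 := hlo s hs k
      have h3 := hup s hs l
      have h4 := hlo s hs l
      have h5 : |x k s - x l s| ≤ x ia t0 - x ib t0 :=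
        abs_sub_le_iff.mpr ⟨by linarith, by linarith⟩
      have h6 : D t0 ≤ D 0 := hDmono le_rfl ht0
      rw [← hDt0] at h5
      linarith
    -- generic per-term bounds
    have hterms : ∀ s ∈ Icc t0 (t0+T), ∀ k : Fin N,
        (M i k s * φ |x i s - x k s| * (x k s - x i s) ≤ Kmax * (x ia t0 - x i s)) ∧
        (-(M j k s * φ |x j s - x k s| * (x k s - x j s)) ≤ Kmax * (x j s - x ib t0)) := by
      intro s hs k
      have hs0 : (0:ℝ) ≤ s := le_trans ht0 hs.1
      have hMik := hM_range i k s hs0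
      have hMjk := hM_range j k s hs0
      have hφik := hφ_pos |x i s - x k s| (abs_nonneg _)
      have hφjk := hφ_pos |x j s - x k s| (abs_nonneg _)
      have hφikK := hKmaxge _ (hdistD s hs i k)
      have hφjkK := hKmaxge _ (hdistD s hs j k)
      have hMφik : 0 ≤ M i k s * φ |x i s - x k s| := mul_nonneg hMik.1 hφik.le
      have hMφjk : 0 ≤ M j k s * φ |x j s - x k s| := mul_nonneg hMjk.1 hφjk.le
      have hMφikK : M i k s * φ |x i s - x k s| ≤ Kmax := by
        calc M i k s * φ |x i s - x k s| ≤ 1 * φ |x i s - x k s| :=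
              mul_le_mul_of_nonneg_right hMik.2 hφik.le
          _ ≤ Kmax := by rw [one_mul]; exact hφikK
      have hMφjkK : M j k s * φ |x j s - x k s| ≤ Kmax := by
        calc M j k s * φ |x j s - x k s| ≤ 1 * φ |x j s - x k s| :=
              mul_le_mul_of_nonneg_right hMjk.2 hφjk.le
          _ ≤ Kmax := by rw [one_mul]; exact hφjkK
      have hkup := hup s hs k
      have hklo := hlo s hs k
      have hiup := hup s hs i
      have hjlo := hlo s hs j
      constructor
      · calc M i k s * φ |x i s - x k s| * (x k s - x i s)
            ≤ M i k s * φ |x i s - x k s| * (x ia t0 - x i s) :=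
              mul_le_mul_of_nonneg_left (by linarith) hMφik
          _ ≤ Kmax * (x ia t0 - x i s) :=
              mul_le_mul_of_nonneg_right hMφikK (by linarith)
      · have hrw : -(M j k s * φ |x j s - x k s| * (x k s - x j s))
            = M j k s * φ |x j s - x k s| * (x j s - x k s) := by ring
        rw [hrw]
        calc M j k s * φ |x j s - x k s| * (x j s - x k s)
            ≤ M j k s * φ |x j s - x k s| * (x j s - x ib t0) :=
              mul_le_mul_of_nonneg_left (by linarith) hMφjk
          _ ≤ Kmax * (x j s - x ib t0) :=
              mul_le_mul_of_nonneg_right hMφjkK (by linarith)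
    -- pointwise bound 1
    have hPB1 : ∀ s ∈ Icc t0 (t0+T), gf N φ M x i s - gf N φ M x j s ≤ Kmax * Q s := by
      intro s hs
      simp only [gf]
      rw [← mul_sub, ← Finset.sum_sub_distrib]
      have hsum : ∑ k, (M i k s * φ |x i s - x k s| * (x k s - x i s)
            - M j k s * φ |x j s - x k s| * (x k s - x j s))
          ≤ ∑ _k : Fin N, Kmax * ((x ia t0 - x i s) + (x j s - x ib t0)) := by
        apply Finset.sum_le_sum
        intro k _
        obtain ⟨h1, h2⟩ := hterms s hs k
        linarith
      calc (N:ℝ)⁻¹ * ∑ k, (M i k s * φ |x i s - x k s| * (x k s - x i s)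
            - M j k s * φ |x j s - x k s| * (x k s - x j s))
          ≤ (N:ℝ)⁻¹ * ∑ _k : Fin N, Kmax * ((x ia t0 - x i s) + (x j s - x ib t0)) :=
            mul_le_mul_of_nonneg_left hsum (by positivity)
        _ = Kmax * Q s := by
            rw [Finset.sum_const, Finset.card_univ, Fintype.card_fin, nsmul_eq_mul,
              inv_mul_cancel_left₀ hN0]
            simp only [hQdef, hz]
            rw [hDt0]
            ring
    -- integral inequality, stage 1
    have hineq : ∀ s ∈ Icc t0 (t0+T), Q s ≤ Q (t0+T) + Kmax * ∫ r in s..(t0+T), Q r := by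
      intro s hs
      have hs0 : (0:ℝ) ≤ s := le_trans ht0 hs.1
      have hgi := xinc hφ_lip' hM_meas hM_range hx_cont hx_sol' i hs0 hs.2
      have hgj := xinc hφ_lip' hM_meas hM_range hx_cont hx_sol' j hs0 hs.2
      have hgiII := gf_II hφ_lip' hM_meas hM_range hx_cont i hs0 hs.2
      have hgjII := gf_II hφ_lip' hM_meas hM_range hx_cont j hs0 hs.2
      have hzinc : z (t0+T) - z s = ∫ r in s..(t0+T), (gf N φ M x i r - gf N φ M x j r) := by
        rw [intervalIntegral.integral_sub hgiII hgjII, ← hgi, ← hgj]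
        simp only [hz]
        ring
      have hle : ∫ r in s..(t0+T), (gf N φ M x i r - gf N φ M x j r)
          ≤ Kmax * ∫ r in s..(t0+T), Q r := by
        have h := integral_mono_Ioo hs.2 (hgiII.sub hgjII)
          (((hQcont.mono (Icc_subset_Icc hs.1 le_rfl)).intervalIntegrable_of_Icc hs.2).const_mul Kmax)
          (fun r hr => hPB1 r ⟨le_trans hs.1 hr.1.le, hr.2.le⟩)
        rwa [intervalIntegral.integral_const_mul] at h
      simp only [hQdef]
      simp only [hQdef] at hle
      linarith [hzinc, hle]
    have hgron := gron_back htT hKmaxpos hQcont hineq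
    have hQend : Q (t0+T) < ee * γtilde * D t0 := by
      have hzend : z (t0+T) = D (t0+T) := by
        simp only [hz]
        exact hij.symm
      simp only [hQdef]
      rw [hzend]
      linarith
    have hQsmall : ∀ s ∈ Icc t0 (t0+T), Q s ≤ γtilde * D t0 := by
      intro s hs
      have h1 := hgron s hs
      have h2 : Real.exp (Kmax*(t0+T-s)) ≤ Real.exp (Kmax*T) :=
        Real.exp_le_exp.mpr (by nlinarith [hs.1])
      have h3 : 0 ≤ Q (t0+T) := hQnn _ ⟨htT, le_rfl⟩
      calc Q s ≤ Q (t0+T) * Real.exp (Kmax*(t0+T-s)) := h1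
        _ ≤ Q (t0+T) * Real.exp (Kmax*T) := mul_le_mul_of_nonneg_left h2 h3
        _ ≤ (ee * γtilde * D t0) * Real.exp (Kmax*T) :=
            mul_le_mul_of_nonneg_right hQend.le (Real.exp_pos _).le
        _ = γtilde * D t0 * (ee * Real.exp (Kmax*T)) := by ring
        _ = γtilde * D t0 := by rw [hee1, mul_one]
    have hzlb : ∀ s ∈ Icc t0 (t0+T), (1 - γtilde) * D t0 ≤ z s := by
      intro s hs
      have h := hQsmall s hs
      simp only [hQdef] at h
      linarith
    have hznn : ∀ s ∈ Icc t0 (t0+T), 0 ≤ z s :=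
      fun s hs => le_trans (by nlinarith) (hzlb s hs)
    -- pointwise bound 2
    have hPB2 : ∀ s ∈ Icc t0 (t0+T), gf N φ M x i s - gf N φ M x j s
        ≤ Kmax * Q s - (N:ℝ)⁻¹ * Kmin * ((M i j s + M j i s) * z s) := by
      intro s hs
      have hs0 : (0:ℝ) ≤ s := le_trans ht0 hs.1
      have hzs := hznn s hs
      have hMij := hM_range i j s hs0
      have hMji := hM_range j i s hs0
      have hφzK : Kmin ≤ φ |x i s - x j s| := hKminle _ (hdistD s hs i j)
      have hφzK' : Kmin ≤ φ |x j s - x i s| := hKminle _ (hdistD s hs j i)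
      have hAj : M i j s * φ |x i s - x j s| * (x j s - x i s)
          ≤ Kmax * (x ia t0 - x i s) - Kmin * (M i j s * z s) := by
        have h1 : M i j s * φ |x i s - x j s| * (x j s - x i s)
            = -(M i j s * φ |x i s - x j s| * z s) := by simp only [hz]; ring
        have h2 : Kmin * (M i j s * z s) ≤ M i j s * φ |x i s - x j s| * z s := by
          have h21 : M i j s * Kmin ≤ M i j s * φ |x i s - x j s| :=
            mul_le_mul_of_nonneg_left hφzK hMij.1
          have h22 := mul_le_mul_of_nonneg_right h21 hzs
          nlinarith [h22]
        have h3 : 0 ≤ Kmax * (x ia t0 - x i s) :=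
          mul_nonneg hKmaxpos.le (by linarith [hup s hs i])
        linarith
      have hBi : -(M j i s * φ |x j s - x i s| * (x i s - x j s))
          ≤ Kmax * (x j s - x ib t0) - Kmin * (M j i s * z s) := by
        have h1 : -(M j i s * φ |x j s - x i s| * (x i s - x j s))
            = -(M j i s * φ |x j s - x i s| * z s) := by simp only [hz]
        have h2 : Kmin * (M j i s * z s) ≤ M j i s * φ |x j s - x i s| * z s := by
          have h21 : M j i s * Kmin ≤ M j i s * φ |x j s - x i s| :=
            mul_le_mul_of_nonneg_left hφzK' hMji.1
          have h22 := mul_le_mul_of_nonneg_right h21 hzs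
          nlinarith [h22]
        have h3 : 0 ≤ Kmax * (x j s - x ib t0) :=
          mul_nonneg hKmaxpos.le (by linarith [hlo s hs j])
        linarith
      simp only [gf]
      rw [← mul_sub, ← Finset.sum_sub_distrib]
      have hsum : ∑ k, (M i k s * φ |x i s - x k s| * (x k s - x i s)
            - M j k s * φ |x j s - x k s| * (x k s - x j s))
          ≤ ∑ k : Fin N, (Kmax * ((x ia t0 - x i s) + (x j s - x ib t0))
            - (if k = j then Kmin * (M i j s * z s) else 0)
            - (if k = i then Kmin * (M j i s * z s) else 0)) := by
        apply Finset.sum_le_sum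
        intro k _
        obtain ⟨h1, h2⟩ := hterms s hs k
        by_cases hkj : k = j
        · have hki : ¬ (k = i) := by rw [hkj]; exact fun h => hij_ne h.symm
          subst hkj
          simp only [if_pos rfl, if_neg hki, if_true, if_false, eq_self_iff_true]
          linarith [hAj]
        · by_cases hki : k = i
          · subst hki
            simp only [if_neg hkj, if_pos rfl, if_true, if_false, eq_self_iff_true]
            linarith [hBi]
          · simp only [if_neg hkj, if_neg hki]
            linarith
      have hsums : ∑ k : Fin N, (Kmax * ((x ia t0 - x i s) + (x j s - x ib t0))
            - (if k = j then Kmin * (M i j s * z s) else 0)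
            - (if k = i then Kmin * (M j i s * z s) else 0))
          = (N:ℝ) * (Kmax * ((x ia t0 - x i s) + (x j s - x ib t0)))
            - Kmin * (M i j s * z s) - Kmin * (M j i s * z s) := by
        rw [Finset.sum_sub_distrib, Finset.sum_sub_distrib, Finset.sum_const,
          Finset.card_univ, Fintype.card_fin, nsmul_eq_mul,
          Finset.sum_ite_eq' Finset.univ j (fun _ => Kmin * (M i j s * z s)),
          Finset.sum_ite_eq' Finset.univ i (fun _ => Kmin * (M j i s * z s))]
        simp
      calc (N:ℝ)⁻¹ * ∑ k, (M i k s * φ |x i s - x k s| * (x k s - x i s)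
            - M j k s * φ |x j s - x k s| * (x k s - x j s))
          ≤ (N:ℝ)⁻¹ * ((N:ℝ) * (Kmax * ((x ia t0 - x i s) + (x j s - x ib t0)))
            - Kmin * (M i j s * z s) - Kmin * (M j i s * z s)) :=
            mul_le_mul_of_nonneg_left (hsum.trans_eq hsums) (by positivity)
        _ = Kmax * Q s - (N:ℝ)⁻¹ * Kmin * ((M i j s + M j i s) * z s) := by
            rw [mul_sub, mul_sub, inv_mul_cancel_left₀ hN0]
            simp only [hQdef, hz]
            rw [hDt0]
            ring
    -- integrate stage 2
    have hTII : IntervalIntegrable Q volume t0 (t0+T) := hQcont.intervalIntegrable_of_Icc htT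
    have hzc : ContinuousOn z (Icc t0 (t0+T)) :=
      ((hx_cont i).mono hsubT).sub ((hx_cont j).mono hsubT)
    have hWII : IntervalIntegrable (fun s => (M i j s + M j i s) * z s) volume t0 (t0+T) := by
      obtain ⟨Cz, hCz⟩ := isCompact_Icc.exists_bound_of_continuousOn hzc
      apply II_of_bdd htT (C := 2 * Cz)
      · exact (((hM_meas i j).aemeasurable.add (hM_meas j i).aemeasurable).restrict).mul
          (hzc.aemeasurable measurableSet_Icc)
      · intro s hs
        have h1 := hM_range i j s (le_trans ht0 hs.1)
        have h2 := hM_range j i s (le_trans ht0 hs.1)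
        have h3 := hCz s hs
        rw [Real.norm_eq_abs] at h3
        have hCznn : (0:ℝ) ≤ Cz := le_trans (abs_nonneg _) h3
        rw [abs_mul]
        have h4 : |M i j s + M j i s| ≤ 2 :=
          abs_le.mpr ⟨by linarith [h1.1, h2.1], by linarith [h1.2, h2.2]⟩
        nlinarith [abs_nonneg (z s), abs_nonneg (M i j s + M j i s)]
    have hMII : IntervalIntegrable (M i j) volume t0 (t0+T) := by
      apply II_of_bdd htT (C := 1)
      · exact (hM_meas i j).aemeasurable.restrict
      · intro s hs
        have h1 := hM_range i j s (le_trans ht0 hs.1)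
        exact abs_le.mpr ⟨by linarith [h1.1], h1.2⟩
    have hMII' : IntervalIntegrable (M j i) volume t0 (t0+T) := by
      apply II_of_bdd htT (C := 1)
      · exact (hM_meas j i).aemeasurable.restrict
      · intro s hs
        have h1 := hM_range j i s (le_trans ht0 hs.1)
        exact abs_le.mpr ⟨by linarith [h1.1], h1.2⟩
    have hgiII := gf_II hφ_lip' hM_meas hM_range hx_cont i ht0 htT
    have hgjII := gf_II hφ_lip' hM_meas hM_range hx_cont j ht0 htT
    have hzinc2 : z (t0+T) - z t0
        = ∫ r in t0..(t0+T), (gf N φ M x i r - gf N φ M x j r) := by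
      rw [intervalIntegral.integral_sub hgiII hgjII,
        ← xinc hφ_lip' hM_meas hM_range hx_cont hx_sol' i ht0 htT,
        ← xinc hφ_lip' hM_meas hM_range hx_cont hx_sol' j ht0 htT]
      simp only [hz]
      ring
    have hint2 : z (t0+T) - z t0 ≤ Kmax * (∫ s in t0..(t0+T), Q s)
        - (N:ℝ)⁻¹ * Kmin * ∫ s in t0..(t0+T), (M i j s + M j i s) * z s := by
      have h := integral_mono_Ioo htT (hgiII.sub hgjII)
        ((hTII.const_mul Kmax).sub (hWII.const_mul ((N:ℝ)⁻¹ * Kmin)))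
        (fun r hr => hPB2 r ⟨hr.1.le, hr.2.le⟩)
      rw [intervalIntegral.integral_sub (hTII.const_mul Kmax) (hWII.const_mul ((N:ℝ)⁻¹ * Kmin)),
        intervalIntegral.integral_const_mul, intervalIntegral.integral_const_mul] at h
      rw [← hzinc2] at h
      exact h
    have hQint_le : ∫ s in t0..(t0+T), Q s ≤ T * (γtilde * D t0) := by
      have h := integral_mono_Ioo htT hTII (intervalIntegrable_const (c := γtilde * D t0))
        (fun r hr => hQsmall r ⟨hr.1.le, hr.2.le⟩)
      rwa [intervalIntegral.integral_const, smul_eq_mul, show t0 + T - t0 = T by ring] at h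
    have hLnn : 0 ≤ (1 - γtilde) * D t0 := by nlinarith
    have hWint_ge : (1 - γtilde) * D t0 * (2*μ)
        ≤ ∫ s in t0..(t0+T), (M i j s + M j i s) * z s := by
      have hlow : ∀ r ∈ Ioo t0 (t0+T),
          (fun s => (M i j s + M j i s) * ((1 - γtilde) * D t0)) r
            ≤ (fun s => (M i j s + M j i s) * z s) r := by
        intro r hr
        have hr' : r ∈ Icc t0 (t0+T) := ⟨hr.1.le, hr.2.le⟩
        have hr0 : (0:ℝ) ≤ r := le_trans ht0 hr'.1
        have hM1 := hM_range i j r hr0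
        have hM2 := hM_range j i r hr0
        exact mul_le_mul_of_nonneg_left (hzlb r hr') (by linarith [hM1.1, hM2.1])
      have h := integral_mono_Ioo htT ((hMII.add hMII').mul_const ((1 - γtilde) * D t0)) hWII hlow
      rw [intervalIntegral.integral_mul_const, intervalIntegral.integral_add hMII hMII'] at h
      have hPE1 := hPE i j t0 ht0
      have hPE2 := hPE j i t0 ht0
      nlinarith [h, hPE1, hPE2, hLnn]
    have hzt0 : z t0 ≤ D t0 := by
      rw [hDt0]
      simp only [hz]
      linarith [hia i, hib j]
    have hzend : z (t0+T) = D (t0+T) := by simp only [hz]; exact hij.symm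
    have hchain : D (t0+T) ≤ D t0 + Kmax * (T * (γtilde * D t0))
        - (N:ℝ)⁻¹ * Kmin * ((1 - γtilde) * D t0 * (2*μ)) := by
      have h2 : Kmax * (∫ s in t0..(t0+T), Q s) ≤ Kmax * (T * (γtilde * D t0)) :=
        mul_le_mul_of_nonneg_left hQint_le hKmaxpos.le
      have h3 : (N:ℝ)⁻¹ * Kmin * ((1 - γtilde) * D t0 * (2*μ))
          ≤ (N:ℝ)⁻¹ * Kmin * ∫ s in t0..(t0+T), (M i j s + M j i s) * z s :=
        mul_le_mul_of_nonneg_left hWint_ge (by positivity)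
      rw [hzend] at hint2
      set I1 := ∫ (s : ℝ) in t0..t0 + T, Q s with hI1
      set I2 := ∫ (s : ℝ) in t0..t0 + T, (M i j s + M j i s) * z s with hI2
      clear_value I1 I2
      clear hI1 hI2 hQint_le hWint_ge
      revert hint2 hzt0 h2 h3
      generalize D (t0 + T) = DT
      generalize hg2 : D t0 = Dt0
      generalize z t0 = zt0
      intro hint2 hzt0 h2 h3
      linarith only [hint2, hzt0, h2, h3]
    -- numeric contradiction
    have hkey : (1 - γtilde) * D t0 < D t0 + Kmax * (T * (γtilde * D t0))
        - (N:ℝ)⁻¹ * Kmin * ((1 - γtilde) * D t0 * (2*μ)) := by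
      have hmono2 : (1 - γtilde) * D t0 ≤ (1 - ee * γtilde) * D t0 := by nlinarith
      linarith [hcon, hchain]
    have hmul := mul_lt_mul_of_pos_left hkey hNR
    have hNinv : (N:ℝ) * ((N:ℝ)⁻¹ * Kmin * ((1 - γtilde) * D t0 * (2*μ)))
        = Kmin * ((1 - γtilde) * D t0 * (2*μ)) := by
      field_simp
    have hγdD : γtilde * ((N:ℝ)*(1+Kmax*T) + 2*μ*Kmin) * D t0 = μ * Kmin * D t0 := by
      rw [hγtilde]
      field_simp
    nlinarith [hmul, hNinv, hγdD, mul_pos (mul_pos hμ hKminpos) hpos]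
  -- conclusion by induction
  intro n
  induction n with
  | zero => simp
  | succ n ih =>
    have hstep := one_step ((n:ℝ)*T) (by positivity)
    have hcast : (((n+1 : ℕ)):ℝ)*T = (n:ℝ)*T + T := by push_cast; ring
    rw [hcast]
    calc D ((n:ℝ)*T + T) ≤ (1 - ee * γtilde) * D ((n:ℝ)*T) := hstep
      _ ≤ (1 - ee * γtilde) * ((1 - ee * γtilde)^n * D 0) :=
          mul_le_mul_of_nonneg_left ih hc0
      _ = (1 - ee * γtilde)^(n+1) * D 0 := by ring
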